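/- Euler characteristic is a homotopy invariant of finite simple graphs: if G and H are homotopic (connected by a chain of pyramid extensions over contractible subgraphs and their inverses), then χ(G) = χ(H). -/

import Mathlib

noncomputable def cfilter {V : Type*} (p : V → Prop) (s : Finset V) : Finset V :=
  @Finset.filter _ p (Classical.decPred p) s

lemma cfilter_card_lt {V : Type*} {p : V → Prop} {s : Finset V} {x : V} (hx : x ∈ s)
    (hpx : ¬ p x) : (cfilter p s).card < s.card := by
  classical
  refine Finset.card_lt_card ?_
  unfold cfilter
  rw [Finset.filter_congr_decidable]
  exact (Finset.ssubset_iff_of_subset (Finset.filter_subset _ _)).mpr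
    ⟨x, hx, fun h => hpx (Finset.mem_filter.mp h).2⟩

/-- Ivashchenko contractibility (in itself) of the subgraph of `G` induced on the finite
vertex set `s`: either `s` is a single vertex, or there is an injective function `f` on `s`
such that for every non-minimal vertex `x` the down-sphere `S⁻_f(x)` (the neighbours of `x`
in `s` with smaller `f`-value) is contractible in itself. -/
def Contractible {V : Type*} (G : SimpleGraph V) (s : Finset V) : Prop :=
  s.card = 1 ∨ (1 < s.card ∧ ∃ f : V → ℝ, Set.InjOn f ↑s ∧
    ∀ x ∈ s, (∃ y ∈ s, f y < f x) →
      Contractible G (cfilter (fun y => G.Adj x y ∧ f y < f x) s))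
termination_by s.card
decreasing_by
  rename_i hx hlt
  exact cfilter_card_lt hx (fun h => G.loopless.irrefl x h.1)

/-- A finite simple graph with vertices labelled by natural numbers. -/
structure FGraph where
  verts : Finset ℕ
  graph : SimpleGraph ℕ
  support : ∀ x y, graph.Adj x y → x ∈ verts ∧ y ∈ verts

/-- An elementary expansion: a pyramid extension adding one new vertex joined to exactly
the vertices of a subgraph `H` that is contractible in itself. -/
def Expansion (A B : FGraph) : Prop :=
  ∃ x ∉ A.verts, ∃ H : Finset ℕ, H ⊆ A.verts ∧ Contractible A.graph H ∧
    B.verts = insert x A.verts ∧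
    ∀ a b, B.graph.Adj a b ↔
      A.graph.Adj a b ∨ (a = x ∧ b ∈ H) ∨ (b = x ∧ a ∈ H)

/-- An elementary homotopy step: a pyramid extension over a contractible subgraph, or its
inverse (removal of a vertex whose unit sphere is contractible in itself). -/
def HomotopyStep (A B : FGraph) : Prop := Expansion A B ∨ Expansion B A

/-- Two finite simple graphs are homotopic if they are connected by a finite chain of
elementary homotopy steps. -/
def Homotopic : FGraph → FGraph → Prop := Relation.ReflTransGen HomotopyStep

/-- Euler characteristic of the subgraph of `G` induced on the finite vertex set `s`:
the alternating sum `Σ_k (-1)^k v_k`, where `v_k` is the number of `(k+1)`-cliques of `G`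
contained in `s`. -/
noncomputable def echar {V : Type*} (G : SimpleGraph V) (s : Finset V) : ℤ :=
  ∑ k ∈ Finset.range (s.card + 1),
    (-1 : ℤ) ^ k *
      (Nat.card {t : Finset V // t ⊆ s ∧ t.card = k + 1 ∧ G.IsClique (t : Set V)} : ℤ)

set_option linter.unusedSectionVars false

lemma mem_cfilter {V : Type*} {p : V → Prop} {s : Finset V} {x : V} :
    x ∈ cfilter p s ↔ x ∈ s ∧ p x := by
  classical
  unfold cfilter
  rw [Finset.filter_congr_decidable, Finset.mem_filter]

section Aux
variable {V : Type*} [DecidableEq V] (G : SimpleGraph V)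


noncomputable def cn (s : Finset V) (k : ℕ) : ℕ :=
  Nat.card {t : Finset V // t ⊆ s ∧ t.card = k + 1 ∧ G.IsClique (t : Set V)}

instance finCliques (s : Finset V) (P : Finset V → Prop) :
    Finite {t : Finset V // t ⊆ s ∧ P t} := by
  apply Finite.of_injective (fun t => (⟨t.1, Finset.mem_powerset.mpr t.2.1⟩ : {u // u ∈ s.powerset}))
  intro a b h
  exact Subtype.ext (by simpa using congrArg Subtype.val h)

lemma cn_eq_zero {s : Finset V} {k : ℕ} (h : s.card < k + 1) : cn G s k = 0 := by
  have : IsEmpty {t : Finset V // t ⊆ s ∧ t.card = k + 1 ∧ G.IsClique (t : Set V)} :=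
    ⟨fun ⟨t, hts, htc, _⟩ => absurd (Finset.card_le_card hts) (by omega)⟩
  exact Nat.card_of_isEmpty

lemma echar_eq_sum (s : Finset V) {n : ℕ} (hn : s.card + 1 ≤ n) :
    echar G s = ∑ k ∈ Finset.range n, (-1 : ℤ) ^ k * (cn G s k : ℤ) := by
  refine Finset.sum_subset (Finset.range_subset_range.mpr hn) ?_
  intro k _ hk
  rw [Finset.mem_range, not_lt] at hk
  show (-1 : ℤ) ^ k * (cn G s k : ℤ) = 0
  rw [cn_eq_zero G (by omega)]
  simp

lemma cn_insert {s : Finset V} {x : V} (hx : x ∉ s) (k : ℕ) :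
    cn G (insert x s) k = cn G s k +
      Nat.card {t : Finset V // t ⊆ cfilter (fun y => G.Adj x y) s ∧ t.card = k ∧
        G.IsClique (t : Set V)} := by
  set S := cfilter (fun y => G.Adj x y) s with hS
  have hSs : S ⊆ s := fun y hy => (mem_cfilter.mp hy).1
  have hxS : x ∉ S := fun h => hx (hSs h)
  simp only [cn]
  rw [← Nat.card_sum]
  refine Nat.card_congr (Equiv.symm (Equiv.ofBijective (fun t => Sum.elim
    (fun (u : {t : Finset V // t ⊆ s ∧ t.card = k + 1 ∧ G.IsClique (t : Set V)}) =>
      (⟨u.1, u.2.1.trans (Finset.subset_insert x s), u.2.2⟩ :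
        {t : Finset V // t ⊆ insert x s ∧ t.card = k + 1 ∧ G.IsClique (t : Set V)}))
    (fun (u : {t : Finset V // t ⊆ S ∧ t.card = k ∧ G.IsClique (t : Set V)}) =>
      ⟨insert x u.1, by
        obtain ⟨u, hu1, hu2, hu3⟩ := u
        refine ⟨Finset.insert_subset_insert x (hu1.trans hSs), ?_, ?_⟩
        · rw [Finset.card_insert_of_notMem (fun h => hxS (hu1 h)), hu2]
        · rw [Finset.coe_insert]
          exact hu3.insert (fun b hb _ => (mem_cfilter.mp (hu1 hb)).2)⟩) t) ?_))
  constructor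
  · rintro (a | a) (b | b) h <;> simp only [Sum.elim_inl, Sum.elim_inr, Subtype.mk.injEq] at h
    · exact congrArg Sum.inl (Subtype.ext h)
    · exact absurd (h ▸ Finset.mem_insert_self x b.1) (fun hm => hx (a.2.1 hm))
    · exact absurd (h ▸ Finset.mem_insert_self x a.1) (fun hm => hx (b.2.1 hm))
    · refine congrArg Sum.inr (Subtype.ext ?_)
      have ha : x ∉ a.1 := fun h => hxS (a.2.1 h)
      have hb : x ∉ b.1 := fun h => hxS (b.2.1 h)
      rw [← Finset.erase_insert ha, ← Finset.erase_insert hb, h]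
  · rintro ⟨t, hts, htc, htq⟩
    by_cases hxt : x ∈ t
    · refine ⟨Sum.inr ⟨t.erase x, ?_, ?_, ?_⟩, ?_⟩
      · intro y hy
        have hyt := Finset.mem_of_mem_erase hy
        have hyx := Finset.ne_of_mem_erase hy
        have hys : y ∈ s := by
          rcases Finset.mem_insert.mp (hts hyt) with h | h
          · exact absurd h hyx
          · exact h
        exact mem_cfilter.mpr ⟨hys,
          htq (Finset.mem_coe.mpr hxt) (Finset.mem_coe.mpr hyt) (Ne.symm hyx)⟩
      · rw [Finset.card_erase_of_mem hxt, htc]; rfl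
      · exact htq.subset (by simp [Finset.erase_subset])
      · simp only [Sum.elim_inr, Subtype.mk.injEq]
        exact Finset.insert_erase hxt
    · refine ⟨Sum.inl ⟨t, ?_, htc, htq⟩, rfl⟩
      intro y hy
      rcases Finset.mem_insert.mp (hts hy) with h | h
      · exact absurd (h ▸ hy) hxt
      · exact h


lemma echar_insert {s : Finset V} {x : V} (hx : x ∉ s) :
    echar G (insert x s) = echar G s + 1 - echar G (cfilter (fun y => G.Adj x y) s) := by
  set S := cfilter (fun y => G.Adj x y) s with hS
  have hSs : S ⊆ s := fun y hy => (mem_cfilter.mp hy).1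
  have hc : (insert x s).card = s.card + 1 := Finset.card_insert_of_notMem hx
  set m : ℕ → ℕ := fun k =>
    Nat.card {t : Finset V // t ⊆ S ∧ t.card = k ∧ G.IsClique (t : Set V)} with hm
  have h1 : echar G (insert x s)
      = ∑ k ∈ Finset.range (s.card + 2), (-1:ℤ)^k * (cn G (insert x s) k : ℤ) :=
    echar_eq_sum G _ (by omega)
  have h2 : echar G s = ∑ k ∈ Finset.range (s.card + 2), (-1:ℤ)^k * (cn G s k : ℤ) :=
    echar_eq_sum G _ (by omega)
  have h3 : echar G S = ∑ k ∈ Finset.range (s.card + 1), (-1:ℤ)^k * (cn G S k : ℤ) :=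
    echar_eq_sum G _ (by have := Finset.card_le_card hSs; omega)
  have hm0 : m 0 = 1 := by
    haveI : Unique {t : Finset V // t ⊆ S ∧ t.card = 0 ∧ G.IsClique (t : Set V)} :=
      { default := ⟨∅, by simp⟩,
        uniq := fun t => Subtype.ext (Finset.card_eq_zero.mp t.2.2.1) }
    exact Nat.card_unique
  have hmk : ∀ k, m (k + 1) = cn G S k := fun k => rfl
  have step : ∀ k, (-1:ℤ)^k * (cn G (insert x s) k : ℤ)
      = (-1:ℤ)^k * (cn G s k : ℤ) + (-1:ℤ)^k * (m k : ℤ) := by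
    intro k
    rw [cn_insert G hx k]
    push_cast
    ring
  rw [h1, h2, h3]
  rw [Finset.sum_congr rfl (fun k _ => step k), Finset.sum_add_distrib]
  have h4 : ∑ k ∈ Finset.range (s.card + 2), (-1:ℤ)^k * (m k : ℤ)
      = 1 - ∑ k ∈ Finset.range (s.card + 1), (-1:ℤ)^k * (cn G S k : ℤ) := by
    rw [Finset.sum_range_succ']
    simp only [hmk, hm0, pow_succ, pow_zero, one_mul, Nat.cast_one]
    rw [show ∀ a b : ℤ, a + 1 = 1 - b ↔ a = -b from fun a b => by constructor <;> intro <;> omega,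
      ← Finset.sum_neg_distrib]
    exact Finset.sum_congr rfl fun k _ => by ring
  rw [h4]
  ring


lemma echar_congr {G' : SimpleGraph V} {s : Finset V}
    (h : ∀ a ∈ s, ∀ b ∈ s, (G.Adj a b ↔ G'.Adj a b)) : echar G s = echar G' s := by
  refine Finset.sum_congr rfl fun k _ => ?_
  congr 2
  refine Nat.card_congr (Equiv.subtypeEquivRight fun t => ?_)
  constructor
  · rintro ⟨h1, h2, h3⟩
    exact ⟨h1, h2, fun a ha b hb hab => (h a (h1 ha) b (h1 hb)).mp (h3 ha hb hab)⟩
  · rintro ⟨h1, h2, h3⟩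
    exact ⟨h1, h2, fun a ha b hb hab => (h a (h1 ha) b (h1 hb)).mpr (h3 ha hb hab)⟩

lemma contractible_echar : ∀ n {s : Finset V}, s.card = n → Contractible G s →
    echar G s = 1 := by
  intro n
  induction n using Nat.strong_induction_on with
  | _ n ih =>
    intro s hcard hC
    subst hcard
    rw [Contractible] at hC
    rcases hC with h1 | ⟨hlt, f, hinj, hf⟩
    · obtain ⟨a, ha⟩ := Finset.card_eq_one.mp h1
      have e0 : cn G s 0 = 1 := by
        haveI : Unique {t : Finset V // t ⊆ s ∧ t.card = 0 + 1 ∧ G.IsClique (t : Set V)} :=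
          { default := ⟨s, Finset.Subset.refl s, h1, by subst ha; simp⟩
            uniq := fun t => Subtype.ext (show (t : Finset V) = s from
              Finset.eq_of_subset_of_card_le t.2.1 (by rw [t.2.2.1, h1])) }
        exact Nat.card_unique
      have e1 : cn G s 1 = 0 := cn_eq_zero G (by omega)
      rw [echar_eq_sum G s (le_refl _), h1, Finset.sum_range_succ, Finset.sum_range_one]
      show (-1:ℤ)^0 * (cn G s 0 : ℤ) + (-1:ℤ)^1 * (cn G s 1 : ℤ) = 1
      rw [e0, e1]
      norm_num
    · obtain ⟨x, hxs, hmax⟩ := Finset.exists_max_image s f ⟨(Finset.card_pos.mp (by omega)).choose,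
        (Finset.card_pos.mp (by omega)).choose_spec⟩
      have hstrict : ∀ y ∈ s, y ≠ x → f y < f x := fun y hy hne =>
        lt_of_le_of_ne (hmax y hy) (fun he => hne (hinj hy hxs he))
      set s' := s.erase x with hs'
      have hins : insert x s' = s := Finset.insert_erase hxs
      have hxns' : x ∉ s' := Finset.notMem_erase x s
      have hcs' : s'.card = s.card - 1 := Finset.card_erase_of_mem hxs
      have hSeq : cfilter (fun y => G.Adj x y) s'
          = cfilter (fun y => G.Adj x y ∧ f y < f x) s := by
        ext y
        simp only [mem_cfilter, Finset.mem_erase, hs']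
        constructor
        · rintro ⟨⟨hne, hys⟩, hadj⟩
          exact ⟨hys, hadj, hstrict y hys hne⟩
        · rintro ⟨hys, hadj, hlt'⟩
          exact ⟨⟨fun he => absurd hlt' (he ▸ lt_irrefl (f x)), hys⟩, hadj⟩
      obtain ⟨z, hzs, hzx⟩ := Finset.exists_mem_ne hlt x
      have hCS : Contractible G (cfilter (fun y => G.Adj x y ∧ f y < f x) s) :=
        hf x hxs ⟨z, hzs, hstrict z hzs hzx⟩
      have hCs' : Contractible G s' := by
        rcases Nat.lt_or_ge 1 s'.card with h' | h'
        · rw [Contractible]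
          refine Or.inr ⟨h', f, hinj.mono (Finset.coe_subset.mpr (Finset.erase_subset x s)), ?_⟩
          intro y hy hex
          obtain ⟨z', hz', hz'y⟩ := hex
          have heq : cfilter (fun w => G.Adj y w ∧ f w < f y) s'
              = cfilter (fun w => G.Adj y w ∧ f w < f y) s := by
            ext w
            simp only [mem_cfilter, Finset.mem_erase, hs']
            constructor
            · rintro ⟨⟨_, hw⟩, hp⟩
              exact ⟨hw, hp⟩
            · rintro ⟨hw, hp⟩
              refine ⟨⟨fun he => ?_, hw⟩, hp⟩
              subst he
              exact lt_irrefl (f w) (lt_of_lt_of_le hp.2 (hmax y (Finset.mem_of_mem_erase hy)))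
          rw [heq]
          exact hf y (Finset.mem_of_mem_erase hy)
            ⟨z', Finset.mem_of_mem_erase hz', hz'y⟩
        · rw [Contractible]
          exact Or.inl (by omega)
      have e1 : echar G s' = 1 := ih (s.card - 1) (by omega) hcs' hCs'
      have e2 : echar G (cfilter (fun y => G.Adj x y ∧ f y < f x) s) = 1 := by
        refine ih _ (cfilter_card_lt hxs (fun h => G.loopless.irrefl x h.1)) rfl hCS
      calc echar G s = echar G (insert x s') := by rw [hins]
        _ = echar G s' + 1 - echar G (cfilter (fun y => G.Adj x y) s') := echar_insert G hxns'
        _ = 1 := by rw [hSeq, e1, e2]; ring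

end Aux


lemma expansion_echar {A B : FGraph} (h : Expansion A B) :
    echar B.graph B.verts = echar A.graph A.verts := by
  obtain ⟨x, hx, H, hHs, hHc, hBv, hadj⟩ := h
  have hagree : ∀ a ∈ A.verts, ∀ b ∈ A.verts, (B.graph.Adj a b ↔ A.graph.Adj a b) := by
    intro a ha b hb
    constructor
    · intro hab
      rcases (hadj a b).mp hab with h | ⟨hax, _⟩ | ⟨hbx, _⟩
      · exact h
      · exact absurd (hax ▸ ha) hx
      · exact absurd (hbx ▸ hb) hx
    · intro hab
      exact (hadj a b).mpr (Or.inl hab)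
  have hSH : cfilter (fun y => B.graph.Adj x y) A.verts = H := by
    ext y
    simp only [mem_cfilter]
    constructor
    · rintro ⟨hy, hadj'⟩
      rcases (hadj x y).mp hadj' with h | ⟨_, hyH⟩ | ⟨hyx, _⟩
      · exact absurd ((A.support x y h).1) hx
      · exact hyH
      · exact absurd (hyx ▸ hy) hx
    · intro hy
      exact ⟨hHs hy, (hadj x y).mpr (Or.inr (Or.inl ⟨rfl, hy⟩))⟩
  have hH1 : echar B.graph H = 1 := by
    rw [echar_congr B.graph (G' := A.graph) (fun a ha b hb => hagree a (hHs ha) b (hHs hb))]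
    exact contractible_echar A.graph H.card rfl hHc
  rw [hBv, echar_insert B.graph hx, hSH, hH1,
    echar_congr B.graph (fun a ha b hb => hagree a ha b hb)]
  ring

/-- Euler characteristic is a homotopy invariant: homotopic graphs have
the same Euler characteristic. -/
theorem euler_homotopy_invariant (A B : FGraph) (h : Homotopic A B) :
    echar A.graph A.verts = echar B.graph B.verts := by
  induction h with
  | refl => rfl
  | tail _ hstep ih =>
    rcases hstep with h | h
    · exact ih.trans (expansion_echar h).symm
    · exact ih.trans (expansion_echar h)
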